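/- Let S = {s_1 < s_2 < ... < s_d} be an admissible pinnacle set with maximum m = s_d, and let {t_1 < t_2 < ... < t_{m-d}} = [m] \ S. Define w ∈ S_m by w(2j) = s_j and w(2j-1) = t_j for j ≤ d, and w(i) = t_{i-d} for i > 2d. Then Pin(w) = S. -/

import Mathlib

/-- `i` is a peak of the permutation `w` of `{1,…,n}` (represented on `Fin n`):
`0 < i < n-1` (0-indexed) and `w(i-1) < w(i) > w(i+1)`. -/
def IsPeak {n : ℕ} (w : Equiv.Perm (Fin n)) (i : Fin n) : Prop :=
  0 < i.val ∧ ∃ h : i.val + 1 < n,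
    w ⟨i.val - 1, Nat.lt_of_le_of_lt (Nat.sub_le _ _) i.isLt⟩ < w i ∧
    w ⟨i.val + 1, h⟩ < w i

/-- The pinnacle set of `w`, as a set of values in `{1,…,n}`. -/
def Pin {n : ℕ} (w : Equiv.Perm (Fin n)) : Set ℕ :=
  {v | ∃ i : Fin n, IsPeak w i ∧ v = (w i).val + 1}

/-- `p_S(n)`: the number of permutations in `S_n` with pinnacle set `S`. -/
noncomputable def pcount (n : ℕ) (S : Set ℕ) : ℕ :=
  Nat.card {w : Equiv.Perm (Fin n) // Pin w = S}

/-- `S` is an admissible pinnacle set. -/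
def Admissible (S : Finset ℕ) : Prop :=
  ∃ (n : ℕ) (w : Equiv.Perm (Fin n)), Pin w = ↑S

namespace CanonAux

lemma getD_mem (S : Finset ℕ) {k : ℕ} (hk : k < S.card) :
    (S.sort (· ≤ ·)).getD k 0 ∈ S := by
  have hlen : (S.sort (· ≤ ·)).length = S.card := Finset.length_sort _
  rw [List.getD_eq_getElem _ _ (by omega)]
  exact (Finset.mem_sort _).1 (List.getElem_mem _)

lemma getD_strictMono (S : Finset ℕ) {i j : ℕ} (hij : i < j) (hj : j < S.card) :
    (S.sort (· ≤ ·)).getD i 0 < (S.sort (· ≤ ·)).getD j 0 := by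
  have hlen : (S.sort (· ≤ ·)).length = S.card := Finset.length_sort _
  rw [List.getD_eq_getElem _ _ (by omega), List.getD_eq_getElem _ _ (by omega)]
  exact List.pairwise_iff_getElem.1 (Finset.sortedLT_sort S).pairwise i j (by omega) (by omega) hij

lemma getD_mono (S : Finset ℕ) {i j : ℕ} (hij : i ≤ j) (hj : j < S.card) :
    (S.sort (· ≤ ·)).getD i 0 ≤ (S.sort (· ≤ ·)).getD j 0 := by
  rcases eq_or_lt_of_le hij with rfl | h
  · exact le_rfl
  · exact le_of_lt (getD_strictMono S h hj)

lemma mem_exists_getD (S : Finset ℕ) {x : ℕ} (hx : x ∈ S) :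
    ∃ j < S.card, (S.sort (· ≤ ·)).getD j 0 = x := by
  have hlen : (S.sort (· ≤ ·)).length = S.card := Finset.length_sort _
  have : x ∈ S.sort (· ≤ ·) := (Finset.mem_sort _).2 hx
  obtain ⟨j, hj, hje⟩ := List.mem_iff_getElem.1 this
  exact ⟨j, by omega, by rw [List.getD_eq_getElem _ _ hj, hje]⟩

lemma getD_injOn (S : Finset ℕ) {a b : ℕ} (ha : a < S.card) (hb : b < S.card)
    (hab : (S.sort (· ≤ ·)).getD a 0 = (S.sort (· ≤ ·)).getD b 0) : a = b := by
  rcases lt_trichotomy a b with h | h | h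
  · exact absurd hab (ne_of_lt (getD_strictMono S h hb))
  · exact h
  · exact absurd hab.symm (ne_of_lt (getD_strictMono S h ha))

lemma card_filter_lt (S : Finset ℕ) {k : ℕ} (hk : k < S.card) :
    (S.filter (· < (S.sort (· ≤ ·)).getD k 0)).card = k := by
  have himg : S.filter (· < (S.sort (· ≤ ·)).getD k 0)
      = (Finset.range k).image (fun j => (S.sort (· ≤ ·)).getD j 0) := by
    ext x
    simp only [Finset.mem_filter, Finset.mem_image, Finset.mem_range]
    constructor
    · rintro ⟨hxS, hxlt⟩
      obtain ⟨j, hj, hje⟩ := mem_exists_getD S hxS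
      refine ⟨j, ?_, hje⟩
      by_contra hjk
      push_neg at hjk
      have : (S.sort (· ≤ ·)).getD k 0 ≤ x := hje ▸ getD_mono S hjk hj
      omega
    · rintro ⟨j, hjk, rfl⟩
      exact ⟨getD_mem S (lt_trans hjk hk), getD_strictMono S hjk hk⟩
  rw [himg, Finset.card_image_of_injOn (fun a ha b hb hab =>
    getD_injOn S (lt_trans (Finset.mem_range.1 ha) hk) (lt_trans (Finset.mem_range.1 hb) hk) hab),
    Finset.card_range]

lemma card_filter_le (S : Finset ℕ) {k : ℕ} (hk : k < S.card) :
    (S.filter (· ≤ (S.sort (· ≤ ·)).getD k 0)).card = k + 1 := by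
  have himg : S.filter (· ≤ (S.sort (· ≤ ·)).getD k 0)
      = (Finset.range (k + 1)).image (fun j => (S.sort (· ≤ ·)).getD j 0) := by
    ext x
    simp only [Finset.mem_filter, Finset.mem_image, Finset.mem_range]
    constructor
    · rintro ⟨hxS, hxle⟩
      obtain ⟨j, hj, hje⟩ := mem_exists_getD S hxS
      refine ⟨j, ?_, hje⟩
      by_contra hjk
      push_neg at hjk
      have : (S.sort (· ≤ ·)).getD k 0 < x := hje ▸ getD_strictMono S (by omega) hj
      omega
    · rintro ⟨j, hjk, rfl⟩
      exact ⟨getD_mem S (by omega), getD_mono S (by omega) hk⟩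
  rw [himg, Finset.card_image_of_injOn (fun a ha b hb hab =>
    getD_injOn S (by have := Finset.mem_range.1 ha; omega)
      (by have := Finset.mem_range.1 hb; omega) hab),
    Finset.card_range]

lemma getD_lt_of_filter (T : Finset ℕ) (x : ℕ) {k : ℕ}
    (h : k < (T.filter (· < x)).card) : (T.sort (· ≤ ·)).getD k 0 < x := by
  have hkT : k < T.card := lt_of_lt_of_le h (Finset.card_filter_le _ _)
  by_contra hc
  push_neg at hc
  have hsub : T.filter (· < x) ⊆ T.filter (· < (T.sort (· ≤ ·)).getD k 0) := by
    intro y hy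
    rw [Finset.mem_filter] at hy ⊢
    exact ⟨hy.1, lt_of_lt_of_le hy.2 hc⟩
  have := Finset.card_le_card hsub
  rw [card_filter_lt T hkT] at this
  omega

lemma not_peak_succ {n : ℕ} (w : Equiv.Perm (Fin n)) {p q : Fin n}
    (hp : IsPeak w p) (hq : q.val = p.val + 1) : ¬ IsPeak w q := by
  rintro ⟨hq0, hq1, hql, hqr⟩
  obtain ⟨hp0, hp1, hpl, hpr⟩ := hp
  have e1 : (⟨q.val - 1, Nat.lt_of_le_of_lt (Nat.sub_le _ _) q.isLt⟩ : Fin n) = p :=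
    Fin.ext (by simp only [Fin.val_mk]; omega)
  have e2 : (⟨p.val + 1, hp1⟩ : Fin n) = q := Fin.ext (by simp only [Fin.val_mk]; omega)
  rw [e1] at hql
  rw [e2] at hpr
  exact absurd hql (not_lt.2 (le_of_lt hpr))

lemma not_peak_pred {n : ℕ} (w : Equiv.Perm (Fin n)) {p q : Fin n}
    (hp : IsPeak w p) (hq : q.val = p.val - 1) : ¬ IsPeak w q := by
  rintro ⟨hq0, hq1, hql, hqr⟩
  obtain ⟨hp0, hp1, hpl, hpr⟩ := hp
  have e1 : (⟨q.val + 1, hq1⟩ : Fin n) = p := Fin.ext (by simp only [Fin.val_mk]; omega)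
  have e2 : (⟨p.val - 1, Nat.lt_of_le_of_lt (Nat.sub_le _ _) p.isLt⟩ : Fin n) = q :=
    Fin.ext (by simp only [Fin.val_mk]; omega)
  rw [e1] at hqr
  rw [e2] at hpl
  exact absurd hqr (not_lt.2 (le_of_lt hpl))

lemma pin_bound {n : ℕ} (w : Equiv.Perm (Fin n)) (S : Finset ℕ) (hpin : Pin w = ↑S)
    {k : ℕ} (hk : k < S.card) : 2 * k + 3 ≤ (S.sort (· ≤ ·)).getD k 0 := by
  classical
  set s := (S.sort (· ≤ ·)).getD k 0 with hs
  have hmem : ∀ v : ℕ, v ∈ Pin w ↔ v ∈ S := by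
    intro v; rw [hpin]; exact Finset.mem_coe
  set P : Finset (Fin n) :=
    Finset.univ.filter (fun i => IsPeak w i ∧ (w i).val + 1 ≤ s) with hP
  have hPmem : ∀ i : Fin n, i ∈ P ↔ IsPeak w i ∧ (w i).val + 1 ≤ s := by
    intro i; simp [hP]
  have hPcard : P.card = k + 1 := by
    rw [← card_filter_le S hk]
    apply Finset.card_nbij (fun i => (w i).val + 1)
    · intro i hi
      obtain ⟨hpk, hle⟩ := (hPmem i).1 hi
      exact Finset.mem_filter.2 ⟨(hmem _).1 ⟨i, hpk, rfl⟩, hle⟩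
    · intro a _ b _ hab
      simp only at hab
      exact w.injective (Fin.ext (by omega : (w a).val = (w b).val))
    · intro t ht
      simp only [Finset.coe_filter, Set.mem_setOf_eq] at ht
      obtain ⟨htS, hts⟩ := ht
      obtain ⟨i, hpk, rfl⟩ := (hmem t).2 htS
      exact ⟨i, (hPmem i).2 ⟨hpk, hts⟩, rfl⟩
  have hPne : P.Nonempty := Finset.card_pos.1 (by omega)
  set pm := P.max' hPne with hpm
  obtain ⟨hpmpk, hpmle⟩ := (hPmem pm).1 (P.max'_mem hPne)
  obtain ⟨hpm0, hpm1, hpml, hpmr⟩ := hpmpk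
  set f : Fin n → Fin n := fun i => ⟨i.val - 1, Nat.lt_of_le_of_lt (Nat.sub_le _ _) i.isLt⟩
    with hf
  have hPval : ∀ i ∈ P, (w i).val < s := by
    intro i hi; have := ((hPmem i).1 hi).2; omega
  have hP1val : ∀ i ∈ P, (w (f i)).val < s := by
    intro i hi
    obtain ⟨⟨_, _, hl, _⟩, hle⟩ := (hPmem i).1 hi
    have : (w (f i)).val < (w i).val := hl
    omega
  set q : Fin n := ⟨pm.val + 1, hpm1⟩ with hqdef
  have hqval : (w q).val < s := by
    have : (w q).val < (w pm).val := hpmr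
    omega
  set Q := (P ∪ P.image f) ∪ {q} with hQ
  have hfinj : Set.InjOn f ↑P := by
    intro a ha b hb hab
    have ha0 : 0 < a.val := ((hPmem a).1 ha).1.1
    have hb0 : 0 < b.val := ((hPmem b).1 hb).1.1
    have : a.val - 1 = b.val - 1 := congrArg Fin.val hab
    exact Fin.ext (by omega)
  have hdisj1 : Disjoint P (P.image f) := by
    rw [Finset.disjoint_left]
    intro x hx hx'
    obtain ⟨p, hp, rfl⟩ := Finset.mem_image.1 hx'
    exact not_peak_pred w ((hPmem p).1 hp).1 rfl ((hPmem _).1 hx).1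
  have hqP : q ∉ P := fun hq =>
    not_peak_succ w ((hPmem pm).1 (P.max'_mem hPne)).1 rfl ((hPmem q).1 hq).1
  have hqP1 : q ∉ P.image f := by
    intro hq
    obtain ⟨p, hp, hpe⟩ := Finset.mem_image.1 hq
    have h0 : 0 < p.val := ((hPmem p).1 hp).1.1
    have : p.val - 1 = pm.val + 1 := congrArg Fin.val hpe
    have : p.val ≤ pm.val := P.le_max' p hp
    omega
  have hQcard : Q.card = 2 * k + 3 := by
    rw [hQ, Finset.card_union_of_disjoint, Finset.card_union_of_disjoint hdisj1,
      Finset.card_image_of_injOn hfinj, Finset.card_singleton, hPcard]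
    · ring
    · rw [Finset.disjoint_singleton_right, Finset.mem_union]
      rintro (h | h)
      · exact hqP h
      · exact hqP1 h
  have hQval : ∀ i ∈ Q, (w i).val ∈ Finset.range s := by
    intro i hi
    rw [Finset.mem_range]
    rcases Finset.mem_union.1 hi with h | h
    · rcases Finset.mem_union.1 h with h | h
      · exact hPval i h
      · obtain ⟨p, hp, rfl⟩ := Finset.mem_image.1 h
        exact hP1val p hp
    · rw [Finset.mem_singleton.1 h]
      exact hqval
  have := Finset.card_le_card_of_injOn (fun i => (w i).val) hQval
    (fun a _ b _ hab => w.injective (Fin.ext hab))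
  rw [hQcard, Finset.card_range] at this
  exact this

end CanonAux

/-- The canonical permutation `w_S`: pinnacles `s_1 < … < s_d` in the even
positions `2,4,…,2d`, and the non-pinnacles `t_1 < … < t_{m-d}` in increasing
order in the remaining positions. (Positions and values are 1-indexed; the
permutation is represented on `Fin m`, so position `p` is index `p-1` and the
value at index `i` is `(w i).val + 1`.) -/
theorem canonical_perm_pinnacles (S : Finset ℕ) (m d : ℕ) (hS : S.Nonempty)
    (hpos : ∀ s ∈ S, 0 < s) (hadm : Admissible S)
    (hm : S.max' hS = m) (hd : S.card = d)
    (w : Equiv.Perm (Fin m))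
    (hs : ∀ j < d, ∀ h : 2 * j + 1 < m,
      (w ⟨2 * j + 1, h⟩).val + 1 = (S.sort (· ≤ ·)).getD j 0)
    (ht : ∀ j < d, ∀ h : 2 * j < m,
      (w ⟨2 * j, h⟩).val + 1 = ((Finset.Icc 1 m \ S).sort (· ≤ ·)).getD j 0)
    (ht2 : ∀ i, 2 * d ≤ i → ∀ h : i < m,
      (w ⟨i, h⟩).val + 1 = ((Finset.Icc 1 m \ S).sort (· ≤ ·)).getD (i - d) 0) :
    Pin w = ↑S := by
  classical
  obtain ⟨n, w', hw'⟩ := hadm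
  have bound : ∀ k < d, 2 * k + 3 ≤ (S.sort (· ≤ ·)).getD k 0 := fun k hk =>
    CanonAux.pin_bound w' S hw' (by omega)
  have hd1 : 1 ≤ d := by
    have := Finset.card_pos.2 hS; omega
  have hmS : m ∈ S := hm ▸ S.max'_mem hS
  have hsub : S ⊆ Finset.Icc 1 m := by
    intro x hx
    rw [Finset.mem_Icc]
    exact ⟨hpos x hx, hm ▸ S.le_max' x hx⟩
  set T := Finset.Icc 1 m \ S with hT
  have hm1 : 1 ≤ m := hpos m hmS
  have hTcard : T.card = m - d := by
    rw [hT, Finset.card_sdiff_of_subset hsub, Nat.card_Icc, hd]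
    omega
  have hlast : (S.sort (· ≤ ·)).getD (d - 1) 0 = m := by
    have hlen : (S.sort (· ≤ ·)).length = S.card := Finset.length_sort _
    have h1 : (S.sort (· ≤ ·)).length - 1 < (S.sort (· ≤ ·)).length := by
      rw [hlen, hd]; omega
    have h2 := Finset.sorted_last_eq_max' (s := S) (h := h1)
    have h2' : (S.sort (· ≤ ·)).getD ((S.sort (· ≤ ·)).length - 1) 0 = S.max' hS := by
      rw [List.getD_eq_getElem _ _ h1]
      exact h2
    have h3 : (S.sort (· ≤ ·)).length - 1 = d - 1 := by rw [hlen, hd]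
    rw [h3] at h2'
    exact h2'.trans hm
  have hm2d : 2 * d + 1 ≤ m := by
    have hb := bound (d - 1) (by omega)
    rw [hlast] at hb
    omega
  have key : ∀ j < d, ∀ k ≤ j + 1,
      (T.sort (· ≤ ·)).getD k 0 < (S.sort (· ≤ ·)).getD j 0 := by
    intro j hj k hk
    set x := (S.sort (· ≤ ·)).getD j 0 with hx
    have hxS : x ∈ S := CanonAux.getD_mem S (by omega)
    have hxm : x ≤ m := hm ▸ S.le_max' x hxS
    apply CanonAux.getD_lt_of_filter
    have hfsub : S.filter (· < x) ⊆ (Finset.Icc 1 m).filter (· < x) :=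
      Finset.filter_subset_filter _ hsub
    have hTf : T.filter (· < x) = (Finset.Icc 1 m).filter (· < x) \ S.filter (· < x) := by
      ext y
      simp only [hT, Finset.mem_filter, Finset.mem_sdiff]
      tauto
    have hIccf : (Finset.Icc 1 m).filter (· < x) = Finset.Icc 1 (x - 1) := by
      ext y
      simp only [Finset.mem_filter, Finset.mem_Icc]
      omega
    have hSf : (S.filter (· < x)).card = j := CanonAux.card_filter_lt S (by omega)
    have hbx : 2 * j + 3 ≤ x := bound j hj
    rw [hTf, Finset.card_sdiff_of_subset hfsub, hIccf, Nat.card_Icc, hSf]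
    omega
  have hwv : ∀ (a b : Fin m) (xa xb : ℕ), (w a).val + 1 = xa → (w b).val + 1 = xb →
      xa < xb → w a < w b := by
    intro a b xa xb ha hb h
    rw [Fin.lt_def]
    omega
  have hvs : ∀ (a : Fin m) (j : ℕ), j < d → a.val = 2 * j + 1 →
      (w a).val + 1 = (S.sort (· ≤ ·)).getD j 0 := by
    intro a j hj ha
    have hlt : 2 * j + 1 < m := ha ▸ a.isLt
    have e : a = ⟨2 * j + 1, hlt⟩ := Fin.ext ha
    rw [e]
    exact hs j hj hlt
  have hvt : ∀ (a : Fin m) (j : ℕ), j < d → a.val = 2 * j →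
      (w a).val + 1 = (T.sort (· ≤ ·)).getD j 0 := by
    intro a j hj ha
    have hlt : 2 * j < m := ha ▸ a.isLt
    have e : a = ⟨2 * j, hlt⟩ := Fin.ext ha
    rw [e]
    exact ht j hj hlt
  have hvt2 : ∀ (a : Fin m) (k : ℕ), 2 * d ≤ k → a.val = k →
      (w a).val + 1 = (T.sort (· ≤ ·)).getD (k - d) 0 := by
    intro a k hk ha
    have hlt : k < m := ha ▸ a.isLt
    have e : a = ⟨k, hlt⟩ := Fin.ext ha
    rw [e]
    exact ht2 k hk hlt
  ext v
  simp only [Pin, Set.mem_setOf_eq, Finset.mem_coe]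
  constructor
  · rintro ⟨i, hpk, rfl⟩
    obtain ⟨hi0, hi1, hl, hr⟩ := hpk
    by_cases hcase : i.val < 2 * d
    · rcases Nat.even_or_odd i.val with ⟨j, hj⟩ | ⟨j, hj⟩
      · exfalso
        have hjd : j < d := by omega
        have hv1 := hvt i j hjd (by omega)
        have hv2 := hvs ⟨i.val + 1, hi1⟩ j hjd (show i.val + 1 = 2 * j + 1 by omega)
        have hkey := key j hjd j (by omega)
        rw [Fin.lt_def] at hr
        omega
      · have hjd : j < d := by omega
        rw [hvs i j hjd (by omega)]
        exact CanonAux.getD_mem S (by omega)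
    · exfalso
      push_neg at hcase
      have hv1 := hvt2 i i.val hcase rfl
      have hv2 := hvt2 ⟨i.val + 1, hi1⟩ (i.val + 1) (by omega) rfl
      have hmono : (T.sort (· ≤ ·)).getD (i.val - d) 0
          < (T.sort (· ≤ ·)).getD (i.val + 1 - d) 0 := by
        apply CanonAux.getD_strictMono T (by omega)
        rw [hTcard]
        omega
      rw [Fin.lt_def] at hr
      omega
  · intro hv
    obtain ⟨j, hj', hje⟩ := CanonAux.mem_exists_getD S hv
    have hj : j < d := by omega
    have h2j1 : 2 * j + 1 < m := by omega
    refine ⟨⟨2 * j + 1, h2j1⟩, ⟨Nat.succ_pos _, (show 2 * j + 1 + 1 < m by omega), ?_, ?_⟩, ?_⟩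
    · apply hwv _ _ _ _ (hvt _ j hj (show 2 * j + 1 - 1 = 2 * j by omega))
        (hvs _ j hj rfl)
      exact key j hj j (by omega)
    · by_cases hj1 : j + 1 < d
      · apply hwv _ _ _ _ (hvt _ (j + 1) hj1 (show 2 * j + 1 + 1 = 2 * (j + 1) by omega))
          (hvs _ j hj rfl)
        exact key j hj (j + 1) le_rfl
      · have hjd : j + 1 = d := by omega
        have hv2 := hvt2 ⟨2 * j + 1 + 1, show 2 * j + 1 + 1 < m by omega⟩
          (2 * j + 1 + 1) (by omega) rfl
        have hidx : 2 * j + 1 + 1 - d = j + 1 := by omega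
        rw [hidx] at hv2
        apply hwv _ _ _ _ hv2 (hvs _ j hj rfl)
        exact key j hj (j + 1) le_rfl
    · rw [hvs _ j hj rfl]
      exact hje.symm
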